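/- Under the assumption that P ≠ ∅ and that every arc of G is used by at least one cycle cover (i.e., the set J = {f ∈ A : x_f = 0 for all x ∈ P} is empty), the dimension of the directed 2-factor polytope Conv(P) equals m − α, where α is the rank of the (2n)×m matrix obtained by stacking U on top of V. -/

import Mathlib

open Matrix Finset

noncomputable section

/-- Any point of the LP relaxation is in the convex hull of cycle covers (via Birkhoff). -/
private lemma lp_mem_convexHull
    (n m : ℕ) (src tgt : Fin m → Fin n)
    (h_simple : ∀ e f : Fin m, src e = src f → tgt e = tgt f → e = f)
    (U V : Matrix (Fin n) (Fin m) ℝ)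
    (hU : ∀ i e, U i e = if src e = i then 1 else 0)
    (hV : ∀ i e, V i e = if tgt e = i then 1 else 0)
    (P : Set (Fin m → ℝ))
    (hP : P = {x | (∀ e, x e = 0 ∨ x e = 1) ∧ U.mulVec x = 1 ∧ V.mulVec x = 1})
    (x : Fin m → ℝ) (hx0 : ∀ e, 0 ≤ x e)
    (hxU : U.mulVec x = 1) (hxV : V.mulVec x = 1) :
    x ∈ convexHull ℝ P := by
  classical
  set D : Matrix (Fin n) (Fin n) ℝ :=
    Matrix.of (fun i j => ∑ e, if src e = i ∧ tgt e = j then x e else 0) with hD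
  have hDapp : ∀ i j, D i j = ∑ e, if src e = i ∧ tgt e = j then x e else 0 := fun i j => rfl
  have hrowU : ∀ i, U.mulVec x i = ∑ e, if src e = i then x e else 0 := by
    intro i
    simp only [Matrix.mulVec, dotProduct, hU, ite_mul, one_mul, zero_mul]
  have hrowV : ∀ i, V.mulVec x i = ∑ e, if tgt e = i then x e else 0 := by
    intro i
    simp only [Matrix.mulVec, dotProduct, hV, ite_mul, one_mul, zero_mul]
  have hDds : D ∈ doublyStochastic ℝ (Fin n) := by
    rw [mem_doublyStochastic_iff_sum]
    refine ⟨fun i j => ?_, fun i => ?_, fun j => ?_⟩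
    · rw [hDapp]
      exact Finset.sum_nonneg fun e _ => by split; exacts [hx0 e, le_rfl]
    · have hre : ∀ j, D i j = ∑ e, if src e = i ∧ tgt e = j then x e else 0 := hDapp i
      calc (∑ j, D i j) = ∑ j, ∑ e, if src e = i ∧ tgt e = j then x e else 0 :=
            Finset.sum_congr rfl fun j _ => hre j
        _ = ∑ e, ∑ j, if src e = i ∧ tgt e = j then x e else 0 := Finset.sum_comm
        _ = ∑ e, if src e = i then x e else 0 := by
            refine Finset.sum_congr rfl fun e _ => ?_
            simp [ite_and, Finset.sum_ite_eq]
        _ = U.mulVec x i := (hrowU i).symm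
        _ = 1 := by rw [hxU]; exact Pi.one_apply i
    · have hre : ∀ i, D i j = ∑ e, if src e = i ∧ tgt e = j then x e else 0 := fun i => hDapp i j
      calc (∑ i, D i j) = ∑ i, ∑ e, if src e = i ∧ tgt e = j then x e else 0 :=
            Finset.sum_congr rfl fun i _ => hre i
        _ = ∑ e, ∑ i, if src e = i ∧ tgt e = j then x e else 0 := Finset.sum_comm
        _ = ∑ e, if tgt e = j then x e else 0 := by
            refine Finset.sum_congr rfl fun e _ => ?_
            have hsw : ∀ i, (if src e = i ∧ tgt e = j then x e else 0)
                = if src e = i then (if tgt e = j then x e else 0) else 0 := fun i => by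
              by_cases h1 : src e = i <;> by_cases h2 : tgt e = j <;> simp [h1, h2]
            rw [Finset.sum_congr rfl (fun i _ => hsw i), Finset.sum_ite_eq]
            simp
        _ = V.mulVec x j := (hrowV j).symm
        _ = 1 := by rw [hxV]; exact Pi.one_apply j
  obtain ⟨w, hw0, hw1, hwD⟩ := exists_eq_sum_perm_of_mem_doublyStochastic hDds
  set y : Equiv.Perm (Fin n) → Fin m → ℝ :=
    fun σ e => if σ (src e) = tgt e then 1 else 0 with hy
  have hperm : ∀ (σ : Equiv.Perm (Fin n)) (i j : Fin n),
      σ.permMatrix ℝ i j = if σ i = j then 1 else 0 := by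
    intro σ i j
    simp [Equiv.Perm.permMatrix, PEquiv.toMatrix_apply, Equiv.toPEquiv_apply, Option.mem_def,
      eq_comm]
  have hDsum : ∀ i j, D i j = ∑ σ : Equiv.Perm (Fin n), (if σ i = j then w σ else 0) := by
    intro i j
    rw [← hwD]
    rw [Matrix.sum_apply]
    refine Finset.sum_congr rfl fun σ _ => ?_
    rw [Matrix.smul_apply, hperm, smul_eq_mul, mul_ite, mul_one, mul_zero]
  have hDe : ∀ e, D (src e) (tgt e) = x e := by
    intro e
    rw [hDapp]
    rw [Finset.sum_eq_single e]
    · simp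
    · intro f _ hf
      refine if_neg fun hc => hf (h_simple f e hc.1 hc.2)
    · intro h
      exact absurd (Finset.mem_univ e) h
  have hDpos : ∀ σ : Equiv.Perm (Fin n), 0 < w σ → ∀ i, 0 < D i (σ i) := by
    intro σ hσ i
    rw [hDsum]
    have h1 : (0:ℝ) < (if σ i = σ i then w σ else 0) := by simp [hσ]
    refine lt_of_lt_of_le h1
      (Finset.single_le_sum (f := fun τ : Equiv.Perm (Fin n) => if τ i = σ i then w τ else 0)
        (fun τ _ => ?_) (Finset.mem_univ σ))
    split
    · exact hw0 τ
    · exact le_rfl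
  have harc : ∀ i j, 0 < D i j → ∃ e, src e = i ∧ tgt e = j := by
    intro i j h
    by_contra hc
    push_neg at hc
    have : D i j = 0 := by
      rw [hDapp]
      refine Finset.sum_eq_zero fun e _ => if_neg fun hce => ?_
      exact hc e hce.1 hce.2
    rw [this] at h
    exact lt_irrefl 0 h
  have hyP : ∀ σ : Equiv.Perm (Fin n), 0 < w σ → y σ ∈ P := by
    intro σ hσ
    rw [hP]
    refine ⟨fun e => ?_, ?_, ?_⟩
    · by_cases h : σ (src e) = tgt e
      · right; simp [hy, h]
      · left; simp [hy, h]
    · funext i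
      obtain ⟨e₀, he₀s, he₀t⟩ := harc i (σ i) (hDpos σ hσ i)
      have : U.mulVec (y σ) i = ∑ e, if src e = i then y σ e else 0 := by
        simp only [Matrix.mulVec, dotProduct, hU, ite_mul, one_mul, zero_mul]
      rw [this]
      rw [Finset.sum_eq_single e₀]
      · simp [he₀s, hy, he₀t]
      · intro f _ hf
        by_cases hsf : src f = i
        · rw [if_pos hsf]
          simp only [hy]
          refine if_neg fun hc => hf (h_simple f e₀ (hsf.trans he₀s.symm) ?_)
          rw [he₀t, ← hc, hsf]
        · exact if_neg hsf
      · intro h; exact absurd (Finset.mem_univ e₀) h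
    · funext i
      obtain ⟨e₀, he₀s, he₀t⟩ := harc (σ⁻¹ i) (σ (σ⁻¹ i)) (hDpos σ hσ (σ⁻¹ i))
      rw [show σ (σ⁻¹ i) = i from σ.apply_symm_apply i] at he₀t
      have : V.mulVec (y σ) i = ∑ e, if tgt e = i then y σ e else 0 := by
        simp only [Matrix.mulVec, dotProduct, hV, ite_mul, one_mul, zero_mul]
      rw [this]
      rw [Finset.sum_eq_single e₀]
      · have : σ (src e₀) = tgt e₀ := by rw [he₀s, show σ (σ⁻¹ i) = i from σ.apply_symm_apply i, he₀t]
        simp [he₀t, hy, this]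
      · intro f _ hf
        by_cases htf : tgt f = i
        · rw [if_pos htf]
          simp only [hy]
          refine if_neg fun hc => ?_
          have hsrc : src f = σ⁻¹ i := by
            have : σ (src f) = i := hc.trans htf
            rw [← this, show σ⁻¹ (σ (src f)) = src f from σ.symm_apply_apply _]
          exact hf (h_simple f e₀ (hsrc.trans he₀s.symm) (htf.trans he₀t.symm))
        · exact if_neg htf
      · intro h; exact absurd (Finset.mem_univ e₀) h
  -- x is a convex combination of the y σ with positive weight
  have hxsum : ∀ e, x e = ∑ σ : Equiv.Perm (Fin n), (if σ (src e) = tgt e then w σ else 0) := by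
    intro e
    rw [← hDe e, hDsum]
  set t : Finset (Equiv.Perm (Fin n)) := Finset.univ.filter (fun σ => w σ ≠ 0) with ht
  have hwsum : ∑ σ ∈ t, w σ = 1 := by
    rw [ht, Finset.sum_filter_ne_zero, hw1]
  have hmem : t.centerMass w y ∈ convexHull ℝ P := by
    refine Finset.centerMass_mem_convexHull t (fun σ hσ => hw0 σ) (by rw [hwsum]; norm_num)
      (fun σ hσ => ?_)
    rw [ht, Finset.mem_filter] at hσ
    exact hyP σ (lt_of_le_of_ne (hw0 σ) (Ne.symm hσ.2))
  have hcm : t.centerMass w y = x := by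
    rw [Finset.centerMass, hwsum, inv_one, one_smul]
    have : ∑ σ ∈ t, w σ • y σ = ∑ σ : Equiv.Perm (Fin n), w σ • y σ := by
      rw [ht]
      refine Finset.sum_filter_of_ne fun σ _ h => ?_
      intro hw
      exact h (by rw [hw, zero_smul])
    rw [this]
    funext e
    rw [Finset.sum_apply, hxsum e]
    refine Finset.sum_congr rfl fun σ _ => ?_
    rw [Pi.smul_apply, hy, smul_eq_mul, mul_ite, mul_one, mul_zero]
  rw [← hcm]
  exact hmem

/-- Under the assumption that the set of cycle covers `P` is nonempty and
every arc of `G` is used by at least one cycle cover, the dimension of the directed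
2-factor polytope `Conv(P)` equals `m - α`, where `α` is the rank of the stacked
matrix `[U; V]`. -/
theorem dim_directed_two_factor_polytope
    (n m : ℕ) (src tgt : Fin m → Fin n)
    (h_simple : ∀ e f : Fin m, src e = src f → tgt e = tgt f → e = f)
    (h_noloop : ∀ e : Fin m, src e ≠ tgt e)
    (U V : Matrix (Fin n) (Fin m) ℝ)
    (hU : ∀ i e, U i e = if src e = i then 1 else 0)
    (hV : ∀ i e, V i e = if tgt e = i then 1 else 0)
    (P : Set (Fin m → ℝ))
    (hP : P = {x | (∀ e, x e = 0 ∨ x e = 1) ∧ U.mulVec x = 1 ∧ V.mulVec x = 1})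
    (hPne : P.Nonempty)
    (hJempty : ∀ f : Fin m, ∃ x ∈ P, x f ≠ 0) :
    Module.finrank ℝ (affineSpan ℝ (convexHull ℝ P)).direction
      = m - (Matrix.fromRows U V).rank := by
  classical
  set M := Matrix.fromRows U V with hM
  -- Membership in the kernel of the stacked matrix
  have hker : ∀ z : Fin m → ℝ, z ∈ LinearMap.ker M.mulVecLin ↔
      (U.mulVec z = 0 ∧ V.mulVec z = 0) := by
    intro z
    rw [LinearMap.mem_ker, Matrix.mulVecLin_apply, hM, Matrix.fromRows_mulVec]
    constructor
    · intro h
      constructor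
      · funext i; exact congrFun h (Sum.inl i)
      · funext i; exact congrFun h (Sum.inr i)
    · rintro ⟨h1, h2⟩
      funext i
      cases i with
      | inl i => exact congrFun h1 i
      | inr i => exact congrFun h2 i
  -- the affine constraint set
  set Q : Set (Fin m → ℝ) := {z | U.mulVec z = 1 ∧ V.mulVec z = 1} with hQ
  have hQconv : Convex ℝ Q := by
    rintro a ⟨haU, haV⟩ b ⟨hbU, hbV⟩ s t hs htt hst
    constructor
    · rw [Matrix.mulVec_add, Matrix.mulVec_smul, Matrix.mulVec_smul, haU, hbU]
      funext i
      simp [hst]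
    · rw [Matrix.mulVec_add, Matrix.mulVec_smul, Matrix.mulVec_smul, haV, hbV]
      funext i
      simp [hst]
  have hPQ : P ⊆ Q := by
    rw [hP, hQ]
    rintro z ⟨_, h1, h2⟩
    exact ⟨h1, h2⟩
  have hSQ : convexHull ℝ P ⊆ Q := convexHull_min hPQ hQconv
  -- The direction is exactly the kernel
  have hdir : (affineSpan ℝ (convexHull ℝ P)).direction = LinearMap.ker M.mulVecLin := by
    rw [direction_affineSpan]
    apply le_antisymm
    · rw [vectorSpan_def, Submodule.span_le]
      rintro _ ⟨a, ha, b, hb, rfl⟩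
      obtain ⟨haU, haV⟩ := hSQ ha
      obtain ⟨hbU, hbV⟩ := hSQ hb
      rw [SetLike.mem_coe, hker]
      constructor
      · show U.mulVec (a - b) = 0
        rw [Matrix.mulVec_sub, haU, hbU, sub_self]
      · show V.mulVec (a - b) = 0
        rw [Matrix.mulVec_sub, haV, hbV, sub_self]
    · intro z hz
      rcases Nat.eq_zero_or_pos m with hm | hm
      · have : z = 0 := by
          funext e
          exact absurd e.2 (by omega)
        rw [this]
        exact Submodule.zero_mem _
      -- m > 0 : build an interior point
      choose p hpP hpne using hJempty
      have hp01 : ∀ f e, p f e = 0 ∨ p f e = 1 := by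
        intro f e
        have := hpP f
        rw [hP] at this
        exact this.1 e
      have hpnn : ∀ f e, 0 ≤ p f e := by
        intro f e
        rcases hp01 f e with h | h <;> rw [h] <;> norm_num
      have hpee : ∀ e, p e e = 1 := by
        intro e
        rcases hp01 e e with h | h
        · exact absurd h (hpne e)
        · exact h
      set xbar : Fin m → ℝ := ((m : ℝ))⁻¹ • ∑ f, p f with hxbar
      have hmpos : (0:ℝ) < m := by exact_mod_cast hm
      have hxbarmem : xbar ∈ convexHull ℝ P := by
        have := Finset.centerMass_mem_convexHull (Finset.univ : Finset (Fin m))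
          (w := fun _ => (1:ℝ)) (z := p) (fun i _ => zero_le_one)
          (by simp [hmpos]) (fun i _ => hpP i)
        rwa [Finset.centerMass, show ∑ _i : Fin m, (1:ℝ) = m by simp, show
          ∑ i : Fin m, (1:ℝ) • p i = ∑ f, p f by simp] at this
      have hxbarpos : ∀ e, (0:ℝ) < xbar e := by
        intro e
        have h1 : (1:ℝ) ≤ ∑ f, p f e := by
          rw [← hpee e]
          exact Finset.single_le_sum (fun f _ => hpnn f e) (Finset.mem_univ e)
        have h2 : xbar e = ((m:ℝ))⁻¹ * ∑ f, p f e := by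
          simp [hxbar, Finset.sum_apply]
        rw [h2]
        positivity
      obtain ⟨hxbarU, hxbarV⟩ := hSQ hxbarmem
      obtain ⟨hzU, hzV⟩ := (hker z).1 hz
      -- choose the step size
      set c : ℝ := Finset.univ.inf' (Finset.univ_nonempty_iff.2 ⟨⟨0, hm⟩⟩)
        (fun e => xbar e / (|z e| + 1)) with hc
      have hcpos : 0 < c := by
        rw [hc, Finset.lt_inf'_iff]
        intro e _
        have := hxbarpos e
        have : 0 < |z e| + 1 := by positivity
        positivity
      have hcle : ∀ e, c ≤ xbar e / (|z e| + 1) :=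
        fun e => Finset.inf'_le _ (Finset.mem_univ e)
      have hbound : ∀ e, c * |z e| ≤ xbar e := by
        intro e
        have h1 := hcle e
        have h2 : 0 < |z e| + 1 := by positivity
        have h3 : 0 ≤ |z e| := abs_nonneg _
        have h5 : (|z e| + 1)⁻¹ * |z e| ≤ 1 := by
          rw [← div_eq_inv_mul]
          exact div_le_one_of_le₀ (by linarith) (by linarith)
        rw [div_eq_mul_inv] at h1
        calc c * |z e| ≤ (xbar e * (|z e| + 1)⁻¹) * |z e| :=
              mul_le_mul_of_nonneg_right h1 h3
          _ = xbar e * ((|z e| + 1)⁻¹ * |z e|) := by ring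
          _ ≤ xbar e * 1 := mul_le_mul_of_nonneg_left h5 (hxbarpos e).le
          _ = xbar e := mul_one _
      have hnn1 : ∀ e, 0 ≤ (xbar + c • z) e := by
        intro e
        have h1 := hbound e
        have h2 : -(c * |z e|) ≤ c * z e := by
          have := neg_abs_le (z e)
          nlinarith [hcpos.le]
        simp only [Pi.add_apply, Pi.smul_apply, smul_eq_mul]
        linarith
      have hnn2 : ∀ e, 0 ≤ (xbar - c • z) e := by
        intro e
        have h1 := hbound e
        have h2 : c * z e ≤ c * |z e| := by
          have := le_abs_self (z e)
          nlinarith [hcpos.le]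
        simp only [Pi.sub_apply, Pi.smul_apply, smul_eq_mul]
        linarith
      have haU : U.mulVec (xbar + c • z) = 1 := by
        rw [Matrix.mulVec_add, hxbarU, Matrix.mulVec_smul, hzU, smul_zero, add_zero]
      have haV : V.mulVec (xbar + c • z) = 1 := by
        rw [Matrix.mulVec_add, hxbarV, Matrix.mulVec_smul, hzV, smul_zero, add_zero]
      have hbU : U.mulVec (xbar - c • z) = 1 := by
        rw [Matrix.mulVec_sub, hxbarU, Matrix.mulVec_smul, hzU, smul_zero, sub_zero]
      have hbV : V.mulVec (xbar - c • z) = 1 := by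
        rw [Matrix.mulVec_sub, hxbarV, Matrix.mulVec_smul, hzV, smul_zero, sub_zero]
      have hamem : (xbar + c • z) ∈ convexHull ℝ P :=
        lp_mem_convexHull n m src tgt h_simple U V hU hV P hP _ hnn1 haU haV
      have hbmem : (xbar - c • z) ∈ convexHull ℝ P :=
        lp_mem_convexHull n m src tgt h_simple U V hU hV P hP _ hnn2 hbU hbV
      have hdiff : (xbar + c • z) -ᵥ (xbar - c • z) ∈ vectorSpan ℝ (convexHull ℝ P) :=
        vsub_mem_vectorSpan ℝ hamem hbmem
      have heq : z = ((2 * c)⁻¹) • ((xbar + c • z) -ᵥ (xbar - c • z)) := by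
        have h2c : (2 * c) ≠ 0 := by positivity
        rw [show (xbar + c • z) -ᵥ (xbar - c • z) = (2 * c) • z by
          funext e
          simp only [Pi.add_apply, Pi.sub_apply, Pi.smul_apply, smul_eq_mul]
          show (xbar e + c * z e) - (xbar e - c * z e) = 2 * c * z e
          ring]
        rw [smul_smul, inv_mul_cancel₀ h2c, one_smul]
      rw [heq]
      exact Submodule.smul_mem _ _ hdiff
  rw [hdir]
  have h1 := LinearMap.finrank_range_add_finrank_ker M.mulVecLin
  have h2 : Module.finrank ℝ (Fin m → ℝ) = m := Module.finrank_fin_fun ℝ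
  have h3 : M.rank = Module.finrank ℝ (LinearMap.range M.mulVecLin) := rfl
  rw [h2] at h1
  rw [h3]
  omega
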